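/- Let H = (V, E) be a 3-uniform hypergraph with vertex weights w : V → ℝ_{≥0} and let p : E → ℝ_{≥0} be a feasible price assignment, i.e., Σ_{e ∋ v} p(e) ≤ w(v) for every vertex v. If the set C of tight vertices (those v with Σ_{e ∋ v} p(e) = w(v)) is a vertex cover of H, then Σ_{v∈C} w(v) ≤ 3 · Σ_{v∈C'} w(v) for every vertex cover C' of H; in particular, the weight of C is at most 3 times the minimum weight of a vertex cover of H. -/

import Mathlib

open Finset

/-- The pricing method for 3-uniform hypergraphs: if `p` is a feasible price assignment
and the set `C` of tight vertices is a vertex cover, then the weight of `C` is at most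
`3` times the weight of any vertex cover `C'`. -/
theorem pricing_three_approx {X : Type*} [Fintype X] [DecidableEq X]
    (Eh : Finset (Finset X)) (h3 : ∀ e ∈ Eh, e.card = 3)
    (w : X → ℝ) (hw : ∀ v, 0 ≤ w v)
    (p : Finset X → ℝ) (hp : ∀ e ∈ Eh, 0 ≤ p e)
    (hfeas : ∀ v : X, ∑ e ∈ Eh.filter (fun e => v ∈ e), p e ≤ w v)
    (C : Finset X)
    (hCtight : ∀ v : X, v ∈ C ↔ ∑ e ∈ Eh.filter (fun e => v ∈ e), p e = w v)
    (hCcover : ∀ e ∈ Eh, ∃ v ∈ e, v ∈ C)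
    (C' : Finset X) (hC' : ∀ e ∈ Eh, ∃ v ∈ e, v ∈ C') :
    ∑ v ∈ C, w v ≤ 3 * ∑ v ∈ C', w v := by
  -- swap sums lemma
  have hswap : ∀ S : Finset X,
      ∑ v ∈ S, ∑ e ∈ Eh.filter (fun e => v ∈ e), p e
        = ∑ e ∈ Eh, ((S.filter (fun v => v ∈ e)).card : ℝ) * p e := by
    intro S
    have : ∀ v ∈ S, ∑ e ∈ Eh.filter (fun e => v ∈ e), p e
        = ∑ e ∈ Eh, if v ∈ e then p e else 0 := by
      intro v _; rw [Finset.sum_filter]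
    rw [Finset.sum_congr rfl this, Finset.sum_comm]
    refine Finset.sum_congr rfl fun e _ => ?_
    rw [← Finset.sum_filter, Finset.sum_const, nsmul_eq_mul]
  have h1 : ∑ v ∈ C, w v ≤ 3 * ∑ e ∈ Eh, p e := by
    have : ∑ v ∈ C, w v = ∑ e ∈ Eh, ((C.filter (fun v => v ∈ e)).card : ℝ) * p e := by
      rw [← hswap]
      exact Finset.sum_congr rfl fun v hv => ((hCtight v).1 hv).symm
    rw [this, Finset.mul_sum]
    refine Finset.sum_le_sum fun e he => ?_
    have hcard : (C.filter (fun v => v ∈ e)).card ≤ 3 := by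
      calc (C.filter (fun v => v ∈ e)).card ≤ e.card :=
            Finset.card_le_card (fun v hv => (Finset.mem_filter.1 hv).2)
        _ = 3 := h3 e he
    have := hp e he
    calc ((C.filter (fun v => v ∈ e)).card : ℝ) * p e ≤ 3 * p e := by
          apply mul_le_mul_of_nonneg_right _ this
          exact_mod_cast hcard
      _ = 3 * p e := rfl
  have h2 : ∑ e ∈ Eh, p e ≤ ∑ v ∈ C', w v := by
    calc ∑ e ∈ Eh, p e ≤ ∑ e ∈ Eh, ((C'.filter (fun v => v ∈ e)).card : ℝ) * p e := by
          refine Finset.sum_le_sum fun e he => ?_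
          have hcard : 1 ≤ (C'.filter (fun v => v ∈ e)).card := by
            obtain ⟨v, hve, hvC⟩ := hC' e he
            exact Finset.card_pos.2 ⟨v, Finset.mem_filter.2 ⟨hvC, hve⟩⟩
          nlinarith [hp e he, (by exact_mod_cast hcard : (1:ℝ) ≤ ((C'.filter (fun v => v ∈ e)).card : ℝ))]
      _ = ∑ v ∈ C', ∑ e ∈ Eh.filter (fun e => v ∈ e), p e := (hswap C').symm
      _ ≤ ∑ v ∈ C', w v := Finset.sum_le_sum fun v _ => hfeas v
  linarith
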